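/- For any point (x, y, s) in the symmetric neighbourhood N̄(γ, λ) of the perturbed central path, every component satisfies min(x_i + λ_i, s_i + λ_i) ≤ √(μ_λ/γ), and hence r(x,s) = ‖min(x,s)‖ ≤ √(n μ_λ/γ) + ‖λ‖. -/

import Mathlib

open Matrix

/-- Euclidean norm of a finite real vector. -/
noncomputable def enorm {ι : Type*} [Fintype ι] (v : ι → ℝ) : ℝ :=
  Real.sqrt (∑ i, v i ^ 2)

/-- Perturbed duality measure `μ_λ = (x+λ)ᵀ(s+λ)/n`. -/
noncomputable def muLam {n : ℕ} (lam x s : Fin n → ℝ) : ℝ :=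
  (∑ i, (x i + lam i) * (s i + lam i)) / n

/-- Membership in the symmetric neighbourhood `N̄(γ, λ)` of the perturbed
central path. -/
def InSymNbhd {m n : ℕ} (H : Matrix (Fin n) (Fin n) ℝ)
    (A : Matrix (Fin m) (Fin n) ℝ) (b : Fin m → ℝ) (c : Fin n → ℝ)
    (γ : ℝ) (lam x s : Fin n → ℝ) (y : Fin m → ℝ) : Prop :=
  A.mulVec x = b ∧ Aᵀ.mulVec y + s - H.mulVec x = c ∧
  (∀ i, 0 < x i + lam i) ∧ (∀ i, 0 < s i + lam i) ∧
  ∀ i, γ * muLam lam x s ≤ (x i + lam i) * (s i + lam i) ∧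
    (x i + lam i) * (s i + lam i) ≤ muLam lam x s / γ

lemma enorm_eq_norm {ι : Type*} [Fintype ι] (v : ι → ℝ) :
    _root_.enorm v = ‖(WithLp.equiv 2 (ι → ℝ)).symm v‖ := by
  rw [EuclideanSpace.norm_eq]
  simp [_root_.enorm, sq_abs]

lemma enorm_sub_le_real {ι : Type*} [Fintype ι] (a b : ι → ℝ) :
    _root_.enorm (fun i => a i - b i) ≤ _root_.enorm a + _root_.enorm b := by
  rw [enorm_eq_norm, enorm_eq_norm, enorm_eq_norm]
  exact norm_sub_le _ _

/-- For any point `(x, y, s)` in the symmetric neighbourhood `N̄(γ, λ)`, every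
component satisfies `min(xᵢ + λᵢ, sᵢ + λᵢ) ≤ √(μ_λ/γ)`, and hence
`r(x,s) = ‖min(x,s)‖ ≤ √(n μ_λ/γ) + ‖λ‖`. -/
theorem r_bound_in_symmetric_neighbourhood {m n : ℕ}
    (H : Matrix (Fin n) (Fin n) ℝ) (A : Matrix (Fin m) (Fin n) ℝ)
    (b : Fin m → ℝ) (c : Fin n → ℝ)
    (γ : ℝ) (hγ : γ ∈ Set.Ioo (0 : ℝ) 1)
    (lam : Fin n → ℝ) (hlam : 0 ≤ lam)
    (x : Fin n → ℝ) (y : Fin m → ℝ) (s : Fin n → ℝ)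
    (hmem : InSymNbhd H A b c γ lam x s y) :
    (∀ i, min (x i + lam i) (s i + lam i) ≤ Real.sqrt (muLam lam x s / γ)) ∧
    _root_.enorm (fun i => min (x i) (s i))
      ≤ Real.sqrt (n * muLam lam x s / γ) + _root_.enorm lam := by
  obtain ⟨-, -, hx, hs, hub⟩ := hmem
  set μ := muLam lam x s with hμ
  have hmin_pos : ∀ i, 0 < min (x i + lam i) (s i + lam i) :=
    fun i => lt_min (hx i) (hs i)
  have hsq : ∀ i, (min (x i + lam i) (s i + lam i)) ^ 2 ≤ μ / γ := by
    intro i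
    have h1 : (min (x i + lam i) (s i + lam i)) ^ 2
        ≤ (x i + lam i) * (s i + lam i) := by
      rcases le_total (x i + lam i) (s i + lam i) with h | h
      · rw [min_eq_left h, sq]
        exact mul_le_mul_of_nonneg_left h (hx i).le
      · rw [min_eq_right h, sq]
        exact mul_le_mul_of_nonneg_right h (hs i).le
    exact h1.trans (hub i).2
  have hpart1 : ∀ i, min (x i + lam i) (s i + lam i) ≤ Real.sqrt (μ / γ) := by
    intro i
    have hnn : 0 ≤ μ / γ := le_trans (sq_nonneg _) (hsq i)
    exact (Real.le_sqrt (hmin_pos i).le hnn).mpr (hsq i)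
  refine ⟨hpart1, ?_⟩
  have hkey : (fun i => min (x i) (s i))
      = fun i => min (x i + lam i) (s i + lam i) - lam i := by
    funext i
    rcases le_total (x i) (s i) with h | h
    · rw [min_eq_left h, min_eq_left (by linarith), add_sub_cancel_right]
    · rw [min_eq_right h, min_eq_right (by linarith), add_sub_cancel_right]
  rw [hkey]
  refine le_trans (enorm_sub_le_real _ _) (add_le_add_left ?_ _)
  have hsum : ∑ i, (min (x i + lam i) (s i + lam i)) ^ 2 ≤ n * μ / γ := by
    calc ∑ i, (min (x i + lam i) (s i + lam i)) ^ 2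
        ≤ ∑ _i : Fin n, μ / γ := Finset.sum_le_sum fun i _ => hsq i
      _ = n * μ / γ := by
          rw [Finset.sum_const]
          simp [mul_div_assoc]
  calc _root_.enorm (fun i => min (x i + lam i) (s i + lam i))
      ≤ Real.sqrt (n * μ / γ) := Real.sqrt_le_sqrt hsum
    _ = Real.sqrt (↑n * μ / γ) := rfl
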